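/- Let Fˣ act on the additive group F × F by k · (β,γ) = (k^(m+1)·β, k^(m+2)·γ). Then the only additive subgroups A of F × F that are invariant under this action and have cardinality q are F × {0} and {0} × F. (This is the key structural step behind Lemma 2.19, which shows that the Ree group ²G₂(q) has exactly two conjugacy classes of subgroups of order q(q−1).) -/
import Mathlib

lemma aux_pow_gcd {G : Type*} [CommGroup G] (g : G) (a b : ℕ) (hg : g ^ b = 1) :
    ∃ x : G, x ^ a = g ^ Nat.gcd a b := by
  refine ⟨g ^ Nat.gcdA a b, ?_⟩
  have h := Nat.gcd_eq_gcd_ab a b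
  have hgb : g ^ ((b : ℤ) * Nat.gcdB a b) = 1 := by
    rw [zpow_mul, zpow_natCast, hg, one_zpow]
  calc (g ^ Nat.gcdA a b) ^ a
      = g ^ ((a : ℤ) * Nat.gcdA a b) := by
        rw [← zpow_natCast (g ^ Nat.gcdA a b) a, ← zpow_mul, mul_comm]
    _ = g ^ ((a : ℤ) * Nat.gcdA a b) * g ^ ((b : ℤ) * Nat.gcdB a b) := by
        rw [hgb, mul_one]
    _ = g ^ ((Nat.gcd a b : ℤ)) := by rw [← zpow_add, ← h]
    _ = g ^ Nat.gcd a b := zpow_natCast g _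

theorem stmt_13 (n : ℕ) {F : Type*} [Field F] [Fintype F]
    (hF : Fintype.card F = 3 ^ (2 * n + 1))
    (A : AddSubgroup (F × F))
    (hinv : ∀ (κ : Fˣ), ∀ x ∈ A,
      ((κ : F) ^ (3 ^ (n + 1) + 1) * x.1, (κ : F) ^ (3 ^ (n + 1) + 2) * x.2) ∈ A)
    (hcard : Nat.card A = 3 ^ (2 * n + 1)) :
    A = AddSubgroup.prod ⊤ ⊥ ∨ A = AddSubgroup.prod ⊥ ⊤ := by
  classical
  set q : ℕ := 3 ^ (2 * n + 1) with hq
  set m : ℕ := 3 ^ (n + 1) with hm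
  have hq3 : 3 ≤ q := by
    calc 3 = 3 ^ 1 := (pow_one 3).symm
    _ ≤ q := Nat.pow_le_pow_right (by norm_num) (by omega)
  have hm3 : 3 ≤ m := by
    calc 3 = 3 ^ 1 := (pow_one 3).symm
    _ ≤ m := Nat.pow_le_pow_right (by norm_num) (by omega)
  have hmsq : m ^ 2 = 3 * q := by
    rw [hm, hq, ← pow_mul, show (n + 1) * 2 = (2 * n + 1) + 1 by ring, pow_succ, mul_comm]
  -- characteristic 3
  have h3 : (3 : F) = 0 := by
    have h := FiniteField.cast_card_eq_zero F
    rw [hF] at h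
    have : ((3 : ℕ) : F) ^ (2 * n + 1) = 0 := by
      rw [← Nat.cast_pow]; exact_mod_cast h
    have := pow_eq_zero_iff (by omega : 2 * n + 1 ≠ 0) |>.mp this
    exact_mod_cast this
  -- card F % 4 = 3, so -1 is not a square
  have hmod : Fintype.card F % 4 = 3 := by
    rw [hF, hq, show 2 * n + 1 = 1 + 2 * n by ring, pow_add, pow_one, pow_mul, Nat.mul_mod,
      Nat.pow_mod]
    norm_num
  have hns : ¬ IsSquare (-1 : F) := by
    rw [FiniteField.isSquare_neg_one_iff]
    simp [hmod]
  -- every nonzero element is a square or minus a square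
  have hdich : ∀ u : F, u ≠ 0 → IsSquare u ∨ IsSquare (-u) := by
    intro u hu
    by_cases h : IsSquare u
    · exact Or.inl h
    · right
      have h1 : quadraticChar F u = -1 := quadraticChar_neg_one_iff_not_isSquare.mpr h
      have h2 : quadraticChar F (-1 : F) = -1 := quadraticChar_neg_one_iff_not_isSquare.mpr hns
      have h3' : quadraticChar F (-u) = 1 := by
        rw [show -u = -1 * u by ring, map_mul, h1, h2]; norm_num
      exact (quadraticChar_one_iff_isSquare (by simpa using hu)).mp h3'
  -- units have order dividing q - 1
  have hupow : ∀ v : Fˣ, v ^ (q - 1) = 1 := by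
    intro v
    have : v ^ Fintype.card Fˣ = 1 := pow_card_eq_one
    rwa [Fintype.card_units, hF] at this
  -- gcd(m+1, q-1) divides 2
  have hgcd1 : Nat.gcd (m + 1) (q - 1) ∣ 2 := by
    set d := Nat.gcd (m + 1) (q - 1) with hd
    have h1 : (d : ℤ) ∣ (m + 1 : ℤ) := Int.natCast_dvd_natCast.mpr (Nat.gcd_dvd_left _ _)
    have h2 : (d : ℤ) ∣ ((q : ℤ) - 1) := by
      have := Int.natCast_dvd_natCast.mpr (Nat.gcd_dvd_right (m + 1) (q - 1))
      rwa [Nat.cast_sub (by omega), Nat.cast_one] at this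
    have h4 : (d : ℤ) ∣ 2 := by
      have h5 : (d : ℤ) ∣ ((m : ℤ) + 1) * ((m : ℤ) - 1) := Dvd.dvd.mul_right h1 _
      have h6 : ((m : ℤ) + 1) * ((m : ℤ) - 1) = 3 * ((q : ℤ) - 1) + 2 := by
        have : (m : ℤ) ^ 2 = 3 * q := by exact_mod_cast hmsq
        nlinarith [this]
      rw [h6] at h5
      have h7 : (d : ℤ) ∣ 3 * ((q : ℤ) - 1) := Dvd.dvd.mul_left h2 _
      simpa using dvd_sub h5 h7
    exact_mod_cast h4
  -- gcd(m+2, q-1) = 1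
  have hgcd2 : Nat.gcd (m + 2) (q - 1) = 1 := by
    set d := Nat.gcd (m + 2) (q - 1) with hd
    have h1 : (d : ℤ) ∣ (m + 2 : ℤ) := Int.natCast_dvd_natCast.mpr (Nat.gcd_dvd_left _ _)
    have h2 : (d : ℤ) ∣ ((q : ℤ) - 1) := by
      have := Int.natCast_dvd_natCast.mpr (Nat.gcd_dvd_right (m + 2) (q - 1))
      rwa [Nat.cast_sub (by omega), Nat.cast_one] at this
    have h4 : (d : ℤ) ∣ 1 := by
      have h5 : (d : ℤ) ∣ ((m : ℤ) + 2) * ((m : ℤ) - 2) := Dvd.dvd.mul_right h1 _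
      have h6 : ((m : ℤ) + 2) * ((m : ℤ) - 2) = 3 * ((q : ℤ) - 1) - 1 := by
        have : (m : ℤ) ^ 2 = 3 * q := by exact_mod_cast hmsq
        nlinarith [this]
      rw [h6] at h5
      have h7 : (d : ℤ) ∣ 3 * ((q : ℤ) - 1) := Dvd.dvd.mul_left h2 _
      simpa using dvd_sub h7 h5
    exact Nat.dvd_one.mp (by exact_mod_cast h4)
  -- surjectivity statements
  have hsur2 : ∀ u : F, u ≠ 0 → ∃ k : Fˣ, (k : F) ^ (m + 2) = u := by
    intro u hu
    set v : Fˣ := Units.mk0 u hu with hv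
    obtain ⟨x, hx⟩ := aux_pow_gcd v (m + 2) (q - 1) (hupow v)
    refine ⟨x, ?_⟩
    rw [hgcd2, pow_one] at hx
    calc (x : F) ^ (m + 2) = ((x ^ (m + 2) : Fˣ) : F) := by push_cast; ring
      _ = u := by rw [hx]; rfl
  have hsq : ∀ w : F, w ≠ 0 → ∃ k : Fˣ, (k : F) ^ (m + 1) = w ^ 2 := by
    intro w hw
    set v : Fˣ := Units.mk0 w hw with hv
    obtain ⟨x, hx⟩ := aux_pow_gcd v (m + 1) (q - 1) (hupow v)
    obtain ⟨c, hc⟩ := hgcd1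
    refine ⟨x ^ c, ?_⟩
    have : (x ^ c) ^ (m + 1) = v ^ 2 := by
      rw [← pow_mul, mul_comm c, pow_mul, hx, ← pow_mul, ← hc]
    calc ((x ^ c : Fˣ) : F) ^ (m + 1) = (((x ^ c) ^ (m + 1) : Fˣ) : F) := by push_cast; ring
      _ = ((v ^ 2 : Fˣ) : F) := by rw [this]
      _ = w ^ 2 := rfl
  have hsur1 : ∀ u : F, u ≠ 0 → ∃ k : Fˣ, (k : F) ^ (m + 1) = u ∨ (k : F) ^ (m + 1) = -u := by
    intro u hu
    rcases hdich u hu with h | h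
    · obtain ⟨r, hr⟩ := h
      have hr' : r ≠ 0 := by rintro rfl; simp at hr; exact hu hr
      obtain ⟨k, hk⟩ := hsq r hr'
      exact ⟨k, Or.inl (by rw [hk, hr]; ring)⟩
    · obtain ⟨r, hr⟩ := h
      have hr' : r ≠ 0 := by
        rintro rfl; rw [mul_zero] at hr
        exact hu (neg_eq_zero.mp hr)
      obtain ⟨k, hk⟩ := hsq r hr'
      refine ⟨k, Or.inr ?_⟩
      rw [hk, show r ^ 2 = r * r by ring, ← hr]
  -- splitting of coordinates
  have hsplit : ∀ x ∈ A, ((x.1, (0 : F)) : F × F) ∈ A ∧ (((0 : F), x.2) : F × F) ∈ A := by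
    intro x hx
    have hmo : Odd m := Odd.pow (by decide : Odd 3)
    have he1 : ((-1 : Fˣ) : F) ^ (m + 1) = 1 := by
      rw [Units.val_neg, Units.val_one, Even.neg_one_pow (Odd.add_one hmo)]
    have he2 : ((-1 : Fˣ) : F) ^ (m + 2) = -1 := by
      rw [Units.val_neg, Units.val_one, Odd.neg_one_pow (by
        rcases hmo with ⟨j, hj⟩; exact ⟨j + 1, by omega⟩)]
    have hneg := hinv (-1) x hx
    rw [he1, he2, one_mul, neg_one_mul] at hneg
    have h1 : ((x.1 + x.1, (0 : F)) : F × F) ∈ A := by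
      have h := A.add_mem hx hneg
      have e : x + ((x.1, -x.2) : F × F) = (x.1 + x.1, 0) := by
        apply Prod.ext <;> simp
      rwa [e] at h
    have h4 : ((x.1 + x.1 + (x.1 + x.1), (0 : F)) : F × F) ∈ A := by
      have h := A.add_mem h1 h1
      have e : ((x.1 + x.1, (0 : F)) : F × F) + (x.1 + x.1, 0)
          = (x.1 + x.1 + (x.1 + x.1), 0) := by
        apply Prod.ext <;> simp
      rwa [e] at h
    have h5 : x.1 + x.1 + (x.1 + x.1) = x.1 := by linear_combination x.1 * h3
    rw [h5] at h4
    refine ⟨h4, ?_⟩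
    have h := A.sub_mem hx h4
    have e : x - ((x.1, (0 : F)) : F × F) = (0, x.2) := by
      apply Prod.ext <;> simp
    rwa [e] at h
  -- the projections
  set S1 : AddSubgroup F := A.map (AddMonoidHom.fst F F) with hS1def
  set S2 : AddSubgroup F := A.map (AddMonoidHom.snd F F) with hS2def
  have hmem1 : ∀ a : F, a ∈ S1 → ((a, (0 : F)) : F × F) ∈ A := by
    intro a ha
    obtain ⟨x, hx, rfl⟩ := ha
    exact (hsplit x hx).1
  have hmem2 : ∀ b : F, b ∈ S2 → (((0 : F), b) : F × F) ∈ A := by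
    intro b hb
    obtain ⟨x, hx, rfl⟩ := hb
    exact (hsplit x hx).2
  have hTB1 : S1 = ⊥ ∨ S1 = ⊤ := by
    by_cases hb : S1 = ⊥
    · exact Or.inl hb
    right
    obtain ⟨a, ha, ha0⟩ : ∃ a ∈ S1, a ≠ 0 := by
      by_contra h
      push_neg at h
      exact hb ((AddSubgroup.eq_bot_iff_forall S1).mpr h)
    rw [eq_top_iff]
    intro c _
    rcases eq_or_ne c 0 with rfl | hc
    · exact S1.zero_mem
    obtain ⟨k, hk⟩ := hsur1 (c * a⁻¹) (by simp [hc, ha0])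
    have hmemA := hinv k (a, 0) (hmem1 a ha)
    simp only [mul_zero] at hmemA
    have hin : (k : F) ^ (m + 1) * a ∈ S1 := ⟨_, hmemA, rfl⟩
    rcases hk with hk | hk
    · have : (k : F) ^ (m + 1) * a = c := by
        rw [hk]; field_simp
      rwa [this] at hin
    · have : (k : F) ^ (m + 1) * a = -c := by
        rw [hk]; field_simp
      rw [this] at hin
      simpa using S1.neg_mem hin
  have hTB2 : S2 = ⊥ ∨ S2 = ⊤ := by
    by_cases hb : S2 = ⊥
    · exact Or.inl hb
    right
    obtain ⟨a, ha, ha0⟩ : ∃ a ∈ S2, a ≠ 0 := by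
      by_contra h
      push_neg at h
      exact hb ((AddSubgroup.eq_bot_iff_forall S2).mpr h)
    rw [eq_top_iff]
    intro c _
    rcases eq_or_ne c 0 with rfl | hc
    · exact S2.zero_mem
    obtain ⟨k, hk⟩ := hsur2 (c * a⁻¹) (by simp [hc, ha0])
    have hmemA := hinv k (0, a) (hmem2 a ha)
    simp only [mul_zero] at hmemA
    have hin : (k : F) ^ (m + 2) * a ∈ S2 := ⟨_, hmemA, rfl⟩
    have : (k : F) ^ (m + 2) * a = c := by rw [hk]; field_simp
    rwa [this] at hin
  -- A is the product of its projections
  have hA : A = S1.prod S2 := by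
    apply le_antisymm
    · intro x hx
      exact ⟨⟨x, hx, rfl⟩, ⟨x, hx, rfl⟩⟩
    · rintro ⟨a, b⟩ ⟨ha, hb⟩
      have : ((a, b) : F × F) = (a, 0) + (0, b) := by simp
      rw [this]
      exact A.add_mem (hmem1 a ha) (hmem2 b hb)
  have hcardF : Nat.card F = q := by rw [Nat.card_eq_fintype_card, hF]
  rcases hTB1 with h1 | h1 <;> rcases hTB2 with h2 | h2
  · -- both bot: contradiction
    exfalso
    have : A = ⊥ := by
      rw [hA, h1, h2]
      ext ⟨a, b⟩
      simp [AddSubgroup.mem_prod]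
    rw [this] at hcard
    simp at hcard
    omega
  · exact Or.inr (by rw [hA, h1, h2])
  · exact Or.inl (by rw [hA, h1, h2])
  · -- both top: contradiction
    exfalso
    have : A = ⊤ := by
      rw [hA, h1, h2]
      ext ⟨a, b⟩
      simp [AddSubgroup.mem_prod]
    rw [this] at hcard
    rw [show Nat.card (⊤ : AddSubgroup (F × F)) = Nat.card (F × F) from
      Nat.card_congr AddSubgroup.topEquiv.toEquiv, Nat.card_prod, hcardF] at hcard
    have := Nat.eq_of_mul_eq_mul_left (show 0 < q by omega)
      (by rw [mul_one]; exact hcard : q * q = q * 1)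
    omega
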